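/- (Theorem 1) Let Ω ⊆ (ℂ∖{0})^N be open and connected, let v(β,a) be a fixed analytic nowhere-vanishing solution of (GG2) on V × Ω, let l^1,…,l^r be a basis of L = {ℓ ∈ ℂ^N : Σ_j ℓ_j ω^j = 0} (r = N − n), and suppose analytic branches of x(a) = (a^{l^1},…,a^{l^r}) are chosen on Ω, together with analytic functions φ_i(β,x), ψ_i(β,x) satisfying (∂v/∂a_i)(β,a)/v(β − ω^i,a) = φ_i(β, x(a)) and v(β,a)/(a_i v(β − ω^i,a)) = ψ_i(β, x(a)) for i = 1,…,N. Then a function of the form f(β,a) = v(β,a) F(β, x(a)), with F analytic, satisfies the GG-system (GG1), (GG2) on V × Ω if and only if F satisfies the reduced system: F(β − ω^i, x) = φ_i(β,x) F(β,x) + Σ_{k=1}^r l^k_i ψ_i(β,x) x_k (∂F/∂x_k)(β,x) for each i = 1, …, N, where l^k_i denotes the i-th coordinate of the vector l^k ∈ ℂ^N. -/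

import Mathlib

/-- Theorem 1: with `v` a fixed analytic nowhere-vanishing solution of (GG2) on `V × Ω`,
`l^1,…,l^r` a basis of `L = {ℓ : ∑_j ℓ_j ω^j = 0}`, chosen analytic branches
`x(a) = (a^{l^1},…,a^{l^r})` on `Ω` (via analytic logarithms of the coordinates), and
analytic `φ_i, ψ_i` with `(∂v/∂a_i)/v(β-ω^i,·) = φ_i(β,x(a))`,
`v(β,·)/(a_i v(β-ω^i,·)) = ψ_i(β,x(a))`, a function `f = v·F(β,x(a))` with `F` analytic
satisfies the GG-system (GG1),(GG2) on `V × Ω` iff `F` satisfies the reduced system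
`F(β-ω^i,x) = φ_i(β,x) F(β,x) + ∑_k l^k_i ψ_i(β,x) x_k ∂F/∂x_k` for `i = 1,…,N`. -/
theorem stmt7 {V : Type*} [NormedAddCommGroup V] [NormedSpace ℂ V] [FiniteDimensional ℂ V]
    {N r : ℕ} (ω : Fin N → V)
    (hspan : Submodule.span ℂ (Set.range ω) = ⊤)
    (hr : r = N - Module.finrank ℂ V)
    (π : (Fin N → ℂ) →ₗ[ℂ] V) (hπ : ∀ j, π (Pi.single j 1) = ω j)
    (l : Fin r → Fin N → ℂ)
    (hlind : LinearIndependent ℂ l)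
    (hlspan : Submodule.span ℂ (Set.range l) = LinearMap.ker π)
    (Ω : Set (Fin N → ℂ)) (hΩopen : IsOpen Ω) (hΩconn : IsConnected Ω)
    (hΩ0 : ∀ a ∈ Ω, ∀ j, a j ≠ 0)
    (v : V → (Fin N → ℂ) → ℂ)
    (hv : AnalyticOnNhd ℂ (fun p : V × (Fin N → ℂ) => v p.1 p.2) (Set.univ ×ˢ Ω))
    (hvne : ∀ (β : V), ∀ a ∈ Ω, v β a ≠ 0)
    (hvGG2 : ∀ (β : V), ∀ a ∈ Ω,
      ∑ j, (a j * fderiv ℂ (v β) a (Pi.single j 1)) • ω j = v β a • β)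
    (Log : Fin N → (Fin N → ℂ) → ℂ)
    (hLogA : ∀ j, AnalyticOnNhd ℂ (Log j) Ω)
    (hLog : ∀ j, ∀ a ∈ Ω, Complex.exp (Log j a) = a j)
    (X : (Fin N → ℂ) → Fin r → ℂ)
    (hX : ∀ a ∈ Ω, ∀ k, X a k = Complex.exp (∑ j, l k j * Log j a))
    (U : Set (Fin r → ℂ)) (hUopen : IsOpen U) (hXU : X '' Ω ⊆ U)
    (φ ψ : Fin N → V → (Fin r → ℂ) → ℂ)
    (hφA : ∀ i, AnalyticOnNhd ℂ (fun p : V × (Fin r → ℂ) => φ i p.1 p.2) (Set.univ ×ˢ U))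
    (hψA : ∀ i, AnalyticOnNhd ℂ (fun p : V × (Fin r → ℂ) => ψ i p.1 p.2) (Set.univ ×ˢ U))
    (hφ : ∀ (i : Fin N) (β : V), ∀ a ∈ Ω,
      fderiv ℂ (v β) a (Pi.single i 1) / v (β - ω i) a = φ i β (X a))
    (hψ : ∀ (i : Fin N) (β : V), ∀ a ∈ Ω,
      v β a / (a i * v (β - ω i) a) = ψ i β (X a))
    (F : V → (Fin r → ℂ) → ℂ)
    (hFA : AnalyticOnNhd ℂ (fun p : V × (Fin r → ℂ) => F p.1 p.2) (Set.univ ×ˢ U)) :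
    ((∀ (β : V), ∀ a ∈ Ω, ∀ (i : Fin N),
        fderiv ℂ (fun a' => v β a' * F β (X a')) a (Pi.single i 1)
          = v (β - ω i) a * F (β - ω i) (X a)) ∧
     (∀ (β : V), ∀ a ∈ Ω,
        ∑ j, (a j * fderiv ℂ (fun a' => v β a' * F β (X a')) a (Pi.single j 1)) • ω j
          = (v β a * F β (X a)) • β))
    ↔
    (∀ (β : V), ∀ x ∈ X '' Ω, ∀ (i : Fin N),
      F (β - ω i) x = φ i β x * F β x +
        ∑ k, l k i * ψ i β x * x k * fderiv ℂ (F β) x (Pi.single k 1)) := by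
  classical
  -- slice analyticity
  have hvβ : ∀ (β : V), ∀ a ∈ Ω, AnalyticAt ℂ (v β) a := by
    intro β a ha
    exact (hv (β, a) ⟨Set.mem_univ _, ha⟩).comp
      ((analyticAt_const (v := β)).prod analyticAt_id)
  have hFβ : ∀ (β : V), ∀ x ∈ U, AnalyticAt ℂ (F β) x := by
    intro β x hx
    exact (hFA (β, x) ⟨Set.mem_univ _, hx⟩).comp
      ((analyticAt_const (v := β)).prod analyticAt_id)
  -- a continuous linear map on a pi type is determined by single vectors
  have hCLM : ∀ (L : (Fin r → ℂ) →L[ℂ] ℂ) (w : Fin r → ℂ),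
      L w = ∑ k, w k * L (Pi.single k 1) := by
    intro L w
    have hw : w = ∑ k, w k • (Pi.single k 1 : Fin r → ℂ) := by
      funext j; simp [Finset.sum_apply, Pi.single_apply]
    conv_lhs => rw [hw]
    rw [map_sum]
    simp [smul_eq_mul]
  -- the l k are in the kernel: ∑ j, l k j • ω j = 0
  have hLker : ∀ k : Fin r, ∑ j, l k j • ω j = (0 : V) := by
    intro k
    have hmem : l k ∈ LinearMap.ker π := by
      rw [← hlspan]; exact Submodule.subset_span ⟨k, rfl⟩
    have h0 : π (l k) = 0 := hmem
    have hlk : l k = ∑ j, l k j • (Pi.single j 1 : Fin N → ℂ) := by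
      funext j; simp [Finset.sum_apply, Pi.single_apply]
    calc ∑ j, l k j • ω j = ∑ j, l k j • π (Pi.single j 1) := by simp [hπ]
      _ = π (∑ j, l k j • (Pi.single j 1 : Fin N → ℂ)) := by
          rw [map_sum]; simp
      _ = 0 := by rw [← hlk, h0]
  -- derivative of Log j
  have hLogD : ∀ a ∈ Ω, ∀ j, HasFDerivAt (Log j) (fderiv ℂ (Log j) a) a ∧
      ∀ u, fderiv ℂ (Log j) a u = u j / a j := by
    intro a ha j
    have hdiff := ((hLogA j) a ha).differentiableAt
    refine ⟨hdiff.hasFDerivAt, ?_⟩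
    intro u
    have hev : (fun a' => Complex.exp (Log j a')) =ᶠ[nhds a]
        (fun a' : Fin N → ℂ => a' j) := by
      filter_upwards [hΩopen.mem_nhds ha] with b hb using hLog j b hb
    have h1 : HasFDerivAt (fun a' => Complex.exp (Log j a'))
        (Complex.exp (Log j a) • fderiv ℂ (Log j) a) a :=
      (Complex.hasDerivAt_exp (Log j a)).comp_hasFDerivAt a hdiff.hasFDerivAt
    have h2 : HasFDerivAt (fun a' : Fin N → ℂ => a' j)
        (Complex.exp (Log j a) • fderiv ℂ (Log j) a) a :=
      h1.congr_of_eventuallyEq hev.symm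
    have h3 : HasFDerivAt (fun a' : Fin N → ℂ => a' j)
        ((ContinuousLinearMap.proj j : (Fin N → ℂ) →L[ℂ] ℂ)) a :=
      hasFDerivAt_apply j a
    have h4 := h2.unique h3
    have h5 : Complex.exp (Log j a) * fderiv ℂ (Log j) a u = u j := by
      have := congrArg (fun L : (Fin N → ℂ) →L[ℂ] ℂ => L u) h4
      simpa [smul_eq_mul] using this
    rw [hLog j a ha] at h5
    rw [eq_div_iff (hΩ0 a ha j), mul_comm]
    exact h5
  -- derivative of X
  have hXD : ∀ a ∈ Ω, ∃ D : (Fin N → ℂ) →L[ℂ] (Fin r → ℂ), HasFDerivAt X D a ∧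
      ∀ i, D (Pi.single i 1) = fun k => l k i * X a k / a i := by
    intro a ha
    have hDL := fun j => hLogD a ha j
    refine ⟨ContinuousLinearMap.pi
      (fun k => X a k • (∑ j, l k j • fderiv ℂ (Log j) a)), ?_, ?_⟩
    · refine hasFDerivAt_pi.2 fun k => ?_
      have hs : HasFDerivAt (fun a' => ∑ j, l k j * Log j a')
          (∑ j, l k j • fderiv ℂ (Log j) a) a := by
        refine HasFDerivAt.fun_sum fun j _ => ?_
        exact (hDL j).1.const_mul (l k j)
      have hek : HasFDerivAt (fun a' => Complex.exp (∑ j, l k j * Log j a'))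
          (Complex.exp (∑ j, l k j * Log j a) • (∑ j, l k j • fderiv ℂ (Log j) a)) a :=
        (Complex.hasDerivAt_exp _).comp_hasFDerivAt a hs
      have hev : (fun a' => X a' k) =ᶠ[nhds a]
          fun a' => Complex.exp (∑ j, l k j * Log j a') := by
        filter_upwards [hΩopen.mem_nhds ha] with b hb using hX b hb k
      have := hek.congr_of_eventuallyEq hev
      rwa [show Complex.exp (∑ j, l k j * Log j a) = X a k from (hX a ha k).symm] at this
    · intro i
      funext k
      simp only [ContinuousLinearMap.pi_apply, ContinuousLinearMap.smul_apply,
        ContinuousLinearMap.coe_sum', Finset.sum_apply, ContinuousLinearMap.smul_apply,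
        smul_eq_mul]
      have hsum : ∑ j, l k j * fderiv ℂ (Log j) a (Pi.single i 1) = l k i / a i := by
        rw [Finset.sum_eq_single i]
        · rw [(hDL i).2 (Pi.single i 1)]
          simp [Pi.single_apply, div_eq_mul_inv]
        · intro j _ hji
          rw [(hDL j).2 (Pi.single i 1)]
          simp [Pi.single_apply, Ne.symm hji]
        · intro h; exact absurd (Finset.mem_univ i) h
      rw [hsum]; ring
  -- key derivative formula
  have hD : ∀ (β : V), ∀ a ∈ Ω, ∀ i,
      fderiv ℂ (fun a' => v β a' * F β (X a')) a (Pi.single i 1)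
        = fderiv ℂ (v β) a (Pi.single i 1) * F β (X a)
          + (v β a / a i) * ∑ k, l k i * X a k * fderiv ℂ (F β) (X a) (Pi.single k 1) := by
    intro β a ha i
    obtain ⟨DX, hDX, hDXval⟩ := hXD a ha
    have hxU : X a ∈ U := hXU ⟨a, ha, rfl⟩
    have hvd : HasFDerivAt (v β) (fderiv ℂ (v β) a) a :=
      (hvβ β a ha).differentiableAt.hasFDerivAt
    have hFd : HasFDerivAt (F β) (fderiv ℂ (F β) (X a)) (X a) :=
      (hFβ β (X a) hxU).differentiableAt.hasFDerivAt
    have hcomp : HasFDerivAt (fun a' => F β (X a'))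
        ((fderiv ℂ (F β) (X a)).comp DX) a := hFd.comp a hDX
    have hprod : HasFDerivAt (fun a' => v β a' * F β (X a')) _ a := hvd.mul hcomp
    rw [hprod.fderiv]
    simp only [ContinuousLinearMap.add_apply, ContinuousLinearMap.smul_apply,
      ContinuousLinearMap.coe_comp', Function.comp_apply, smul_eq_mul]
    rw [hDXval i, hCLM (fderiv ℂ (F β) (X a)) (fun k => l k i * X a k / a i)]
    rw [Finset.mul_sum, Finset.mul_sum]
    rw [add_comm]
    congr 1
    · exact mul_comm _ _
    · exact Finset.sum_congr rfl fun k _ => by ring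
  -- equivalence of GG1 at (β, a, i) with reduced equation at (β, X a, i)
  have key : ∀ (β : V), ∀ a ∈ Ω, ∀ i,
      (fderiv ℂ (fun a' => v β a' * F β (X a')) a (Pi.single i 1)
          = v (β - ω i) a * F (β - ω i) (X a)) ↔
      (F (β - ω i) (X a) = φ i β (X a) * F β (X a) +
          ∑ k, l k i * ψ i β (X a) * X a k * fderiv ℂ (F β) (X a) (Pi.single k 1)) := by
    intro β a ha i
    rw [hD β a ha i, ← hφ i β a ha, ← hψ i β a ha]
    have hvi := hvne (β - ω i) a ha
    have hai := hΩ0 a ha i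
    have hsum : ∑ k, l k i * (v β a / (a i * v (β - ω i) a)) * X a k *
          fderiv ℂ (F β) (X a) (Pi.single k 1)
        = (v β a / (a i * v (β - ω i) a)) *
          ∑ k, l k i * X a k * fderiv ℂ (F β) (X a) (Pi.single k 1) := by
      rw [Finset.mul_sum]
      exact Finset.sum_congr rfl fun k _ => by ring
    rw [hsum]
    have hrhs : v (β - ω i) a *
        ((fderiv ℂ (v β) a (Pi.single i 1) / v (β - ω i) a) * F β (X a)
          + (v β a / (a i * v (β - ω i) a)) *
            ∑ k, l k i * X a k * fderiv ℂ (F β) (X a) (Pi.single k 1))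
        = fderiv ℂ (v β) a (Pi.single i 1) * F β (X a)
          + (v β a / a i) *
            ∑ k, l k i * X a k * fderiv ℂ (F β) (X a) (Pi.single k 1) := by
      field_simp
    constructor
    · intro h
      have h2 : v (β - ω i) a *
          ((fderiv ℂ (v β) a (Pi.single i 1) / v (β - ω i) a) * F β (X a)
            + (v β a / (a i * v (β - ω i) a)) *
              ∑ k, l k i * X a k * fderiv ℂ (F β) (X a) (Pi.single k 1))
          = v (β - ω i) a * F (β - ω i) (X a) := by rw [hrhs]; exact h
      exact (mul_left_cancel₀ hvi h2).symm
    · intro h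
      rw [h, ← hrhs]
  -- GG2 holds automatically
  have hGG2 : ∀ (β : V), ∀ a ∈ Ω,
      ∑ j, (a j * fderiv ℂ (fun a' => v β a' * F β (X a')) a (Pi.single j 1)) • ω j
        = (v β a * F β (X a)) • β := by
    intro β a ha
    have hterm : ∀ j, (a j * fderiv ℂ (fun a' => v β a' * F β (X a')) a (Pi.single j 1)) • ω j
        = (a j * fderiv ℂ (v β) a (Pi.single j 1) * F β (X a)) • ω j
          + ∑ k, (v β a * (l k j * X a k * fderiv ℂ (F β) (X a) (Pi.single k 1))) • ω j := by
      intro j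
      rw [hD β a ha j]
      have haj := hΩ0 a ha j
      have hsplit : a j * (fderiv ℂ (v β) a (Pi.single j 1) * F β (X a)
            + (v β a / a j) * ∑ k, l k j * X a k * fderiv ℂ (F β) (X a) (Pi.single k 1))
          = a j * fderiv ℂ (v β) a (Pi.single j 1) * F β (X a)
            + ∑ k, v β a * (l k j * X a k * fderiv ℂ (F β) (X a) (Pi.single k 1)) := by
        rw [Finset.mul_sum, mul_add]
        congr 1
        · ring
        · rw [Finset.mul_sum]
          refine Finset.sum_congr rfl fun k _ => ?_
          field_simp
      rw [hsplit, add_smul, Finset.sum_smul]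
    rw [Finset.sum_congr rfl fun j _ => hterm j, Finset.sum_add_distrib]
    have e1 : ∑ j, (a j * fderiv ℂ (v β) a (Pi.single j 1) * F β (X a)) • ω j
        = (v β a * F β (X a)) • β := by
      have h1 : ∀ j, (a j * fderiv ℂ (v β) a (Pi.single j 1) * F β (X a)) • ω j
          = F β (X a) • ((a j * fderiv ℂ (v β) a (Pi.single j 1)) • ω j) := fun j => by
        rw [smul_smul, mul_comm]
      rw [Finset.sum_congr rfl fun j _ => h1 j, ← Finset.smul_sum, hvGG2 β a ha,
        smul_smul, mul_comm]
    have e2 : ∑ j, ∑ k,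
        (v β a * (l k j * X a k * fderiv ℂ (F β) (X a) (Pi.single k 1))) • ω j = 0 := by
      rw [Finset.sum_comm]
      refine Finset.sum_eq_zero fun k _ => ?_
      have h2 : ∀ j, (v β a * (l k j * X a k * fderiv ℂ (F β) (X a) (Pi.single k 1))) • ω j
          = (v β a * X a k * fderiv ℂ (F β) (X a) (Pi.single k 1)) • (l k j • ω j) := by
        intro j
        rw [smul_smul]
        congr 1
        ring
      rw [Finset.sum_congr rfl fun j _ => h2 j, ← Finset.smul_sum, hLker k, smul_zero]
    rw [e1, e2, add_zero]
  constructor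
  · rintro ⟨h1, _⟩ β x hx i
    obtain ⟨a, ha, rfl⟩ := hx
    exact (key β a ha i).1 (h1 β a ha i)
  · intro h
    exact ⟨fun β a ha i => (key β a ha i).2 (h β (X a) ⟨a, ha, rfl⟩ i),
      fun β a ha => hGG2 β a ha⟩
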